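/- Let N ∈ ℕ, N ≥ 2, with 2-adic expansion N = Σ_{l=0}^{L} a_l·2^l, where a_l ∈ {0,1} and a_L = 1 (i.e. L = ⌊log₂ N⌋), and set N₀ = 2·(N − 2^L). Let x*₁ ≤ x*₂ ≤ … ≤ x*_N be the first N terms of the sequence x_n := {log(2n−1)/log 2} arranged in increasing order, and define the gaps g_i := x*_{i+1} − x*_i for 1 ≤ i ≤ N−1 and g_N := x*₁ + 1 − x*_N. Then g_i = (log(2^{L+1} + i) − log(2^{L+1} + i − 1))/log(2) for 1 ≤ i ≤ N₀, and g_i = (log(N − N₀ + i) − log(N − N₀ + i − 1))/log(2) for N₀ + 1 ≤ i ≤ N. -/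

import Mathlib

/-- The sequence `x_n = {log(2n-1)/log 2}`. -/
noncomputable def xseq (n : ℕ) : ℝ := Int.fract (Real.log (2 * (n : ℝ) - 1) / Real.log 2)

lemma logb_two_pow (k : ℕ) : Real.logb 2 ((2:ℝ)^k) = k := by
  rw [Real.logb_pow, Real.logb_self_eq_one (by norm_num)]
  ring

lemma xseq_eq {n k : ℕ} (hn : 1 ≤ n) (h1 : 2^k ≤ 2*n - 1) (h2 : 2*n - 1 < 2^(k+1)) :
    xseq n = Real.logb 2 ((2*(n:ℝ) - 1) / 2^k) := by
  have hcast : ((2*n - 1 : ℕ) : ℝ) = 2*(n:ℝ) - 1 := by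
    push_cast [Nat.cast_sub (by omega : 1 ≤ 2*n)]; ring
  have hm1 : (2:ℝ)^k ≤ 2*(n:ℝ) - 1 := by
    rw [← hcast]; exact_mod_cast h1
  have hm2 : 2*(n:ℝ) - 1 < 2^(k+1) := by
    rw [← hcast]; exact_mod_cast h2
  have hpos : (0:ℝ) < 2*(n:ℝ) - 1 := lt_of_lt_of_le (by positivity) hm1
  have hb : Real.logb 2 (2*(n:ℝ)-1) = Real.log (2*(n:ℝ)-1) / Real.log 2 := rfl
  have hfl : ⌊Real.logb 2 (2*(n:ℝ)-1)⌋ = (k : ℤ) := by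
    rw [Int.floor_eq_iff]
    constructor
    · calc ((k:ℤ):ℝ) = Real.logb 2 ((2:ℝ)^k) := by rw [logb_two_pow]; norm_num
        _ ≤ _ := Real.logb_le_logb_of_le (by norm_num) (by positivity) hm1
    · calc Real.logb 2 (2*(n:ℝ)-1) < Real.logb 2 ((2:ℝ)^(k+1)) :=
            Real.logb_lt_logb (by norm_num) hpos hm2
        _ = ((k:ℤ):ℝ) + 1 := by rw [logb_two_pow]; push_cast; ring
  unfold xseq
  rw [← hb, Int.fract, hfl, Real.logb_div (ne_of_gt hpos) (by positivity), logb_two_pow]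
  push_cast; ring

lemma exists_xseq {L r : ℕ} (hr : r < 2^L) :
    ∃ n, 1 ≤ n ∧ n ≤ 2^L ∧ xseq n = Real.logb 2 (((2^L + r : ℕ) : ℝ) / 2^L) := by
  obtain ⟨v, m, hmodd, hj⟩ := Nat.exists_eq_two_pow_mul_odd (n := 2^L + r) (by positivity)
  obtain ⟨c, rfl⟩ := hmodd
  set n := c + 1 with hn
  have hm : 2*n - 1 = 2*c + 1 := by omega
  have hvL : v ≤ L := by
    by_contra h
    have : 2^(L+1) ≤ 2^v := Nat.pow_le_pow_right (by norm_num) (by omega)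
    have : 2^v ≤ 2^v * (2*c+1) := Nat.le_mul_of_pos_right _ (by omega)
    omega
  have h1 : 2^(L-v) ≤ 2*c+1 := by
    have : 2^v * 2^(L-v) ≤ 2^v * (2*c+1) := by
      rw [← pow_add, Nat.add_sub_cancel' hvL]; omega
    exact Nat.le_of_mul_le_mul_left this (by positivity)
  have h2 : 2*c+1 < 2^(L-v+1) := by
    have hlt : 2^v * (2*c+1) < 2^v * 2^(L-v+1) := by
      rw [← pow_add]
      have : v + (L - v + 1) = L + 1 := by omega
      rw [this]
      have : 2^L + r < 2^(L+1) := by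
        have : 2^(L+1) = 2^L + 2^L := by ring
        omega
      omega
    exact Nat.lt_of_mul_lt_mul_left hlt
  refine ⟨n, by omega, ?_, ?_⟩
  · have : 2*c+1 ≤ 2^(L-v+1) - 1 := by omega
    have h3 : n ≤ 2^(L-v) := by
      have : 2^(L-v+1) = 2*2^(L-v) := by ring
      omega
    exact h3.trans (Nat.pow_le_pow_right (by norm_num) (by omega))
  · rw [xseq_eq (by omega) (hm ▸ h1) (hm ▸ h2)]
    congr 1
    have hc : 2*(n:ℝ) - 1 = ((2*c+1 : ℕ):ℝ) := by push_cast; rw [hn]; push_cast; ring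
    rw [hc]
    rw [div_eq_div_iff (by positivity) (by positivity)]
    have hjr : ((2^L + r : ℕ):ℝ) = 2^v * (2*(c:ℝ)+1) := by
      rw [hj]; push_cast; ring
    have hp : (2:ℝ)^v * 2^(L-v) = 2^L := by
      rw [← pow_add, Nat.add_sub_cancel' hvL]
    rw [hjr, ← hp]
    push_cast
    ring

noncomputable def Tf (L M i : ℕ) : ℝ :=
  if i ≤ 2*M then (2^(L+1) + (i:ℝ) - 1)/2^(L+1) else (2^L + (i:ℝ) - M - 1)/2^L

lemma Tf_A {L M i : ℕ} (h : i ≤ 2*M + 1) :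
    Tf L M i = (2^(L+1) + (i:ℝ) - 1)/2^(L+1) := by
  unfold Tf
  by_cases h2 : i ≤ 2*M
  · rw [if_pos h2]
  · rw [if_neg h2]
    have hi : i = 2*M+1 := by omega
    subst hi
    push_cast
    rw [div_eq_div_iff (by positivity) (by positivity)]
    ring

lemma Tf_B {L M i : ℕ} (h : 2*M + 1 ≤ i) :
    Tf L M i = (2^L + (i:ℝ) - M - 1)/2^L := by
  unfold Tf
  by_cases h2 : i ≤ 2*M
  · omega
  · rw [if_neg h2]

lemma Tf_pos {L M i : ℕ} (hi : 1 ≤ i) : 0 < Tf L M i := by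
  unfold Tf
  by_cases h2 : i ≤ 2*M
  · rw [if_pos h2]
    have : (1:ℝ) ≤ (i:ℝ) := by exact_mod_cast hi
    have : (0:ℝ) < 2^(L+1) := by positivity
    apply div_pos (by linarith) (by positivity)
  · rw [if_neg h2]
    have h3 : 2*M + 1 ≤ i := by omega
    have : (2*(M:ℝ)+1) ≤ (i:ℝ) := by exact_mod_cast h3
    have : (0:ℝ) < 2^L := by positivity
    have hM : (0:ℝ) ≤ (M:ℝ) := Nat.cast_nonneg M
    apply div_pos (by linarith) (by positivity)

lemma Tf_lt {L M i : ℕ} : Tf L M i < Tf L M (i+1) := by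
  by_cases h : i + 1 ≤ 2*M + 1
  · rw [Tf_A h, Tf_A (by omega)]
    have h0 : (0:ℝ) < 2^(L+1) := by positivity
    apply div_lt_div_of_pos_right ?_ h0
    push_cast; linarith
  · rw [Tf_B (by omega), Tf_B (by omega)]
    have h0 : (0:ℝ) < 2^L := by positivity
    apply div_lt_div_of_pos_right ?_ h0
    push_cast; linarith


noncomputable def Yf (L M i : ℕ) : ℝ := Real.logb 2 (Tf L M i)

lemma Yf_lt {L M i j : ℕ} (hi : 1 ≤ i) (hij : i < j) : Yf L M i < Yf L M j := by
  induction j with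
  | zero => omega
  | succ k ih =>
    rcases Nat.lt_succ_iff_lt_or_eq.mp hij with h | h
    · exact (ih h).trans (Real.logb_lt_logb (by norm_num) (Tf_pos (by omega)) Tf_lt)
    · subst h
      exact Real.logb_lt_logb (by norm_num) (Tf_pos hi) Tf_lt

lemma exists_xseq_T {L M i : ℕ} (hM : M + 1 ≤ 2^L) (hi : 1 ≤ i) (hiN : i ≤ 2^L + M) :
    ∃ n, 1 ≤ n ∧ n ≤ 2^L + M ∧ xseq n = Yf L M i := by
  unfold Yf
  by_cases hc : i ≤ 2*M
  · rcases Nat.even_or_odd i with ⟨j, hj⟩ | ⟨r, hr⟩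
    · -- i = 2j even
      have hj1 : 1 ≤ j := by omega
      have hjM : j ≤ M := by omega
      refine ⟨2^L + j, by omega, by omega, ?_⟩
      have e1 : 2^(L+1) ≤ 2*(2^L+j) - 1 := by
        have : 2^(L+1) = 2*2^L := by ring
        omega
      have e2 : 2*(2^L+j) - 1 < 2^(L+1+1) := by
        have h1 : 2^(L+1+1) = 4*2^L := by ring
        have h2 : j ≤ 2^L := by omega
        omega
      rw [xseq_eq (by omega) e1 e2, Tf_A (by omega)]
      congr 1
      have hj2 : i = 2*j := by omega
      have : (i:ℝ) = 2*(j:ℝ) := by exact_mod_cast hj2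
      push_cast [this]
      ring
    · -- i = 2r+1 odd
      have hrM : r + 1 ≤ M := by omega
      obtain ⟨n, hn1, hn2, hn3⟩ := exists_xseq (L := L) (r := r) (by omega)
      refine ⟨n, hn1, by omega, ?_⟩
      rw [hn3, Tf_A (by omega)]
      congr 1
      have : (i:ℝ) = 2*(r:ℝ)+1 := by exact_mod_cast congrArg (Nat.cast : ℕ → ℝ) hr
      push_cast [this]
      rw [div_eq_div_iff (by positivity) (by positivity)]
      ring
  · -- i ≥ 2M+1
    obtain ⟨n, hn1, hn2, hn3⟩ := exists_xseq (L := L) (r := i - M - 1) (by omega)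
    refine ⟨n, hn1, by omega, ?_⟩
    rw [hn3, Tf_B (by omega)]
    congr 1
    rw [Nat.sub_sub]
    push_cast [Nat.cast_sub (show M+1 ≤ i by omega)]
    ring

lemma y_eq_Y (N : ℕ) (y Y : ℕ → ℝ)
    (hmono : ∀ i j, 1 ≤ i → i ≤ j → j ≤ N → y i ≤ y j)
    (hY : ∀ i j, 1 ≤ i → i < j → Y i < Y j)
    (himg : Finset.image y (Finset.Icc 1 N) = Finset.image Y (Finset.Icc 1 N)) :
    ∀ i, 1 ≤ i → i ≤ N → y i = Y i := by
  set S := Finset.Icc 1 N with hS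
  have hYinj : Set.InjOn Y S := by
    intro a ha b hb hab
    simp only [hS, Finset.coe_Icc, Set.mem_Icc] at ha hb
    rcases lt_trichotomy a b with h | h | h
    · exact absurd hab (ne_of_lt (hY a b ha.1 h))
    · exact h
    · exact absurd hab.symm (ne_of_lt (hY b a hb.1 h))
  have hcardY : (S.image Y).card = S.card := Finset.card_image_of_injOn hYinj
  have hyinj : Set.InjOn y S := Finset.card_image_iff.mp (by rw [himg, hcardY])
  set l1 := (List.range N).map (fun j => y (j+1)) with hl1
  set l2 := (List.range N).map (fun j => Y (j+1)) with hl2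
  have hlen1 : l1.length = N := by simp [hl1]
  have hlen2 : l2.length = N := by simp [hl2]
  have hget1 : ∀ (k : ℕ) (hk : k < l1.length), l1.get ⟨k, hk⟩ = y (k+1) := by
    intro k hk; simp [hl1]
  have hget2 : ∀ (k : ℕ) (hk : k < l2.length), l2.get ⟨k, hk⟩ = Y (k+1) := by
    intro k hk; simp [hl2]
  have hmem : ∀ k, k < N → (k+1) ∈ (S : Set ℕ) := by
    intro k hk; simp [hS, Finset.mem_Icc]; omega
  have hs1 : List.Pairwise (· ≤ ·) l1 := by
    rw [List.pairwise_iff_get]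
    intro a b hab
    rw [hget1 a a.2, hget1 b b.2]
    exact hmono _ _ (by omega) (by omega) (by have := b.2; omega)
  have hs2 : List.Pairwise (· ≤ ·) l2 := by
    rw [List.pairwise_iff_get]
    intro a b hab
    rw [hget2 a a.2, hget2 b b.2]
    exact le_of_lt (hY _ _ (Nat.succ_le_succ (Nat.zero_le _)) (Nat.succ_lt_succ hab))
  have hnd1 : l1.Nodup := by
    rw [List.Nodup, List.pairwise_iff_get]
    intro a b hab heq
    rw [hget1 a a.2, hget1 b b.2] at heq
    have := hyinj (hmem a (by have := a.2; omega)) (hmem b (by have := b.2; omega)) heq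
    omega
  have hnd2 : l2.Nodup := by
    rw [List.Nodup, List.pairwise_iff_get]
    intro a b hab heq
    rw [hget2 a a.2, hget2 b b.2] at heq
    exact absurd heq (ne_of_lt (hY _ _ (Nat.succ_le_succ (Nat.zero_le _)) (Nat.succ_lt_succ hab)))
  have ht1 : l1.toFinset = S.image y := by
    ext a
    simp only [hl1, List.mem_toFinset, List.mem_map, List.mem_range, Finset.mem_image, hS,
      Finset.mem_Icc]
    constructor
    · rintro ⟨j, hj, rfl⟩; exact ⟨j+1, ⟨by omega, by omega⟩, rfl⟩
    · rintro ⟨n, ⟨ha, hb⟩, rfl⟩; exact ⟨n-1, by omega, by rw [show n-1+1 = n by omega]⟩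
  have ht2 : l2.toFinset = S.image Y := by
    ext a
    simp only [hl2, List.mem_toFinset, List.mem_map, List.mem_range, Finset.mem_image, hS,
      Finset.mem_Icc]
    constructor
    · rintro ⟨j, hj, rfl⟩; exact ⟨j+1, ⟨by omega, by omega⟩, rfl⟩
    · rintro ⟨n, ⟨ha, hb⟩, rfl⟩; exact ⟨n-1, by omega, by rw [show n-1+1 = n by omega]⟩
  have hperm : l1.Perm l2 :=
    List.perm_of_nodup_nodup_toFinset_eq hnd1 hnd2 (by rw [ht1, ht2, himg])
  have heq : l1 = l2 := List.Perm.eq_of_pairwise' hs1 hs2 hperm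
  intro i hi1 hi2
  have hk : i - 1 < l1.length := by omega
  have hk2 : i - 1 < l2.length := by omega
  have := hget1 (i-1) hk
  rw [show i - 1 + 1 = i by omega] at this
  rw [← this]
  have h2 := hget2 (i-1) hk2
  rw [show i - 1 + 1 = i by omega] at h2
  rw [← h2]
  exact List.get_of_eq heq _

theorem gap_structure (N : ℕ) (hN : 2 ≤ N) (L : ℕ) (hL1 : 2 ^ L ≤ N) (hL2 : N < 2 ^ (L + 1))
    (y : ℕ → ℝ)
    (hmono : ∀ i j, 1 ≤ i → i ≤ j → j ≤ N → y i ≤ y j)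
    (himg : Finset.image y (Finset.Icc 1 N) = Finset.image xseq (Finset.Icc 1 N)) :
    ∀ i, 1 ≤ i → i ≤ N →
      (if i < N then y (i + 1) - y i else y 1 + 1 - y N) =
        (if i ≤ 2 * (N - 2 ^ L) then
          (Real.log (2 ^ (L + 1) + (i : ℝ)) - Real.log (2 ^ (L + 1) + (i : ℝ) - 1)) /
            Real.log 2
        else
          (Real.log ((N : ℝ) - 2 * ((N : ℝ) - 2 ^ L) + i) -
            Real.log ((N : ℝ) - 2 * ((N : ℝ) - 2 ^ L) + i - 1)) / Real.log 2) := by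
  intro i hi1 hi2
  set M := N - 2^L with hMdef
  have hps : 2^(L+1) = 2*2^L := by rw [pow_succ]; ring
  have hMlt : M + 1 ≤ 2^L := by omega
  have hNM : N = 2^L + M := by omega
  have hMR : (M:ℝ) = (N:ℝ) - 2^L := by
    rw [hMdef]
    push_cast [Nat.cast_sub hL1]
    ring
  have himY : (Finset.Icc 1 N).image (Yf L M) ⊆ (Finset.Icc 1 N).image xseq := by
    intro a ha
    simp only [Finset.mem_image, Finset.mem_Icc] at ha ⊢
    obtain ⟨j, ⟨hj1, hj2⟩, rfl⟩ := ha
    obtain ⟨n, hn1, hn2, hn3⟩ := exists_xseq_T hMlt hj1 (by omega)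
    exact ⟨n, ⟨hn1, by omega⟩, hn3⟩
  have hYstrict : ∀ a b, 1 ≤ a → a < b → Yf L M a < Yf L M b := fun a b ha hab => Yf_lt ha hab
  have hYinj : Set.InjOn (Yf L M) (Finset.Icc 1 N) := by
    intro a ha b hb hab
    simp only [Finset.coe_Icc, Set.mem_Icc] at ha hb
    rcases lt_trichotomy a b with h | h | h
    · exact absurd hab (ne_of_lt (hYstrict a b ha.1 h))
    · exact h
    · exact absurd hab.symm (ne_of_lt (hYstrict b a hb.1 h))
  have hcardY : ((Finset.Icc 1 N).image (Yf L M)).card = (Finset.Icc 1 N).card :=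
    Finset.card_image_of_injOn hYinj
  have himg2 : (Finset.Icc 1 N).image (Yf L M) = (Finset.Icc 1 N).image xseq :=
    Finset.eq_of_subset_of_card_le himY (by rw [hcardY]; exact Finset.card_image_le)
  have himgy : (Finset.Icc 1 N).image y = (Finset.Icc 1 N).image (Yf L M) := by
    rw [himg, himg2]
  have hy : ∀ j, 1 ≤ j → j ≤ N → y j = Yf L M j := y_eq_Y N y (Yf L M) hmono hYstrict himgy
  have hlog2 : Real.log 2 ≠ 0 := ne_of_gt (Real.log_pos (by norm_num))
  have hiR : (1:ℝ) ≤ (i:ℝ) := by exact_mod_cast hi1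
  have h2L1 : (0:ℝ) < 2^(L+1) := by positivity
  have h2L : (0:ℝ) < 2^L := by positivity
  by_cases hiN : i < N
  · rw [if_pos hiN, hy i hi1 hi2, hy (i+1) (by omega) (by omega)]
    by_cases hc : i ≤ 2*M
    · rw [if_pos (show i ≤ 2*(N - 2^L) from hc)]
      unfold Yf
      rw [Tf_A (show i+1 ≤ 2*M+1 by omega), Tf_A (show i ≤ 2*M+1 by omega)]
      have hA : (2:ℝ)^(L+1) + (i:ℝ) - 1 ≠ 0 := by
        apply ne_of_gt; linarith
      have hA' : (2:ℝ)^(L+1) + ((i+1:ℕ):ℝ) - 1 ≠ 0 := by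
        apply ne_of_gt; push_cast; linarith
      simp only [Real.logb]
      rw [Real.log_div hA' (ne_of_gt h2L1), Real.log_div hA (ne_of_gt h2L1)]
      rw [show (2:ℝ)^(L+1) + ((i+1:ℕ):ℝ) - 1 = 2^(L+1) + (i:ℝ) by push_cast; ring]
      ring
    · rw [if_neg (show ¬ i ≤ 2*(N - 2^L) from hc)]
      have hcR : 2*(M:ℝ) + 1 ≤ (i:ℝ) := by exact_mod_cast (show 2*M+1 ≤ i by omega)
      have hMR0 : (0:ℝ) ≤ (M:ℝ) := Nat.cast_nonneg M
      unfold Yf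
      rw [Tf_B (show 2*M+1 ≤ i+1 by omega), Tf_B (show 2*M+1 ≤ i by omega)]
      have hB : (2:ℝ)^L + (i:ℝ) - (M:ℝ) - 1 ≠ 0 := by
        apply ne_of_gt; linarith
      have hB' : (2:ℝ)^L + ((i+1:ℕ):ℝ) - (M:ℝ) - 1 ≠ 0 := by
        apply ne_of_gt; push_cast; linarith
      simp only [Real.logb]
      rw [Real.log_div hB' (ne_of_gt h2L), Real.log_div hB (ne_of_gt h2L)]
      rw [show (2:ℝ)^L + ((i+1:ℕ):ℝ) - (M:ℝ) - 1 = (N:ℝ) - 2*((N:ℝ) - 2^L) + i by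
        rw [hMR]; push_cast; ring]
      rw [show (2:ℝ)^L + (i:ℝ) - (M:ℝ) - 1 = (N:ℝ) - 2*((N:ℝ) - 2^L) + i - 1 by
        rw [hMR]; push_cast; ring]
      ring
  · have hiN' : i = N := by omega
    subst hiN'
    rw [if_neg (by omega), if_neg (show ¬ i ≤ 2*(i - 2^L) by omega)]
    rw [hy 1 (by omega) (by omega), hy i (by omega) (by omega)]
    unfold Yf
    rw [Tf_A (show 1 ≤ 2*M+1 by omega), Tf_B (show 2*M+1 ≤ i by omega)]
    rw [show ((2:ℝ)^(L+1) + ((1:ℕ):ℝ) - 1)/2^(L+1) = 1 by push_cast; field_simp; ring]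
    rw [Real.logb_one]
    have heN : (2:ℝ)^L + (i:ℝ) - (M:ℝ) - 1 = 2^(L+1) - 1 := by
      rw [hMR]; push_cast; ring
    have h2big : (1:ℝ) < 2^(L+1) := by
      have : (2:ℝ)^1 ≤ 2^(L+1) := pow_le_pow_right₀ (by norm_num) (by omega)
      norm_num at this ⊢; linarith
    have hne : (2:ℝ)^(L+1) - 1 ≠ 0 := by apply ne_of_gt; linarith
    simp only [Real.logb]
    rw [heN, Real.log_div hne (ne_of_gt h2L)]
    rw [show (i:ℝ) - 2*((i:ℝ) - 2^L) + (i:ℝ) - 1 = (2:ℝ)^(L+1) - 1 by push_cast; ring]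
    rw [show (i:ℝ) - 2*((i:ℝ) - 2^L) + (i:ℝ) = (2:ℝ)^(L+1) by push_cast; ring]
    rw [Real.log_pow, Real.log_pow]
    field_simp
    push_cast; ring
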